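/- Let p ∈ (1,∞). The function K is continuous on (0,1), differentiable on (0,1), and satisfies K'(y) = −F_∞(y, K(y)) = −(16p + 4(3p−2)·K(y) + 2(p−1)·K(y)²) / (y·(4 + (p−1)·K(y))) for every y ∈ (0,1). -/

import Mathlib

open Set Real Filter MeasureTheory

/-- `F_a(y,w)` from the paper (with parameter `p`). -/
noncomputable def Fa (p a y w : ℝ) : ℝ :=
  (8*p*(1/a + 2*y) + (2*p/a + 4*(3*p - 2)*y + 2*(p - 1)*y*w)*w) / (y^2 * (4 + (p - 1)*w))

/-- `G` is the family `a ↦ G_a` of solutions of `G_a' = -F_a(y, G_a)` on `(0,1)`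
with `G_a(1) = 0`: each `G_a` is continuous on `(0,1]`, positive on `(0,1)` and
strictly decreasing on `(0,1]`. -/
def IsGFamily (p : ℝ) (G : ℝ → ℝ → ℝ) : Prop :=
  ∀ a : ℝ, 0 < a →
    ContinuousOn (G a) (Set.Ioc 0 1) ∧
    G a 1 = 0 ∧
    (∀ y ∈ Set.Ioo (0:ℝ) 1, HasDerivAt (G a) (-(Fa p a y (G a y))) y) ∧
    (∀ y ∈ Set.Ioo (0:ℝ) 1, 0 < G a y) ∧
    StrictAntiOn (G a) (Set.Ioc 0 1)

/-- The limiting nonlinearity `F_∞(y,w)`. -/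
noncomputable def Finf (p y w : ℝ) : ℝ :=
  (16*p + 4*(3*p - 2)*w + 2*(p - 1)*w^2) / (y * (4 + (p - 1)*w))

open Topology

lemma Fa_bound {p a y t w M : ℝ} (hp : 1 < p) (ha : 1 ≤ a) (hy : 0 < y) (hty : y ≤ t)
    (ht1 : t ≤ 1) (hw : 0 ≤ w) (hwM : w ≤ M) :
    |Fa p a t w| ≤ (24*p + (2*p + 4*(3*p - 2) + 2*(p - 1)*M)*M) / (4*y^2) := by
  have ha0 : (0:ℝ) < a := lt_of_lt_of_le one_pos ha
  have ht0 : 0 < t := lt_of_lt_of_le hy hty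
  have hM : 0 ≤ M := le_trans hw hwM
  have hia : 0 < 1/a := by positivity
  have h1a : 1/a ≤ 1 := by rw [div_le_one ha0]; exact ha
  have hp0 : 0 < p := by linarith
  have h3 : (0:ℝ) < 3*p - 2 := by linarith
  have hp1 : (0:ℝ) < p - 1 := by linarith
  have h2pa : 0 < 2*p/a := by positivity
  have h2pa' : 2*p/a ≤ 2*p := by rw [div_le_iff₀ ha0]; nlinarith
  have htw : t*w ≤ w := mul_le_of_le_one_left hw ht1
  have hx0 : 0 ≤ 2*p/a + 4*(3*p - 2)*t + 2*(p - 1)*t*w := by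
    nlinarith [mul_nonneg h3.le ht0.le, mul_nonneg (mul_nonneg hp1.le ht0.le) hw]
  have hX0 : 0 ≤ 2*p + 4*(3*p - 2) + 2*(p - 1)*M := by nlinarith
  have hN0 : 0 ≤ 8*p*(1/a + 2*t) + (2*p/a + 4*(3*p - 2)*t + 2*(p - 1)*t*w)*w := by
    have := mul_nonneg hx0 hw
    nlinarith
  have hx : 2*p/a + 4*(3*p - 2)*t + 2*(p - 1)*t*w ≤ 2*p + 4*(3*p - 2) + 2*(p - 1)*M := by
    nlinarith [mul_nonneg h3.le (sub_nonneg.2 ht1),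
      mul_nonneg hp1.le (sub_nonneg.2 (le_trans htw hwM))]
  have hNC : 8*p*(1/a + 2*t) + (2*p/a + 4*(3*p - 2)*t + 2*(p - 1)*t*w)*w ≤
      24*p + (2*p + 4*(3*p - 2) + 2*(p - 1)*M)*M := by
    have h1 : 8*p*(1/a + 2*t) ≤ 24*p := by nlinarith
    have h2 : (2*p/a + 4*(3*p - 2)*t + 2*(p - 1)*t*w)*w ≤
        (2*p + 4*(3*p - 2) + 2*(p - 1)*M)*M := mul_le_mul hx hwM hw hX0
    linarith
  have hD : 4*y^2 ≤ t^2 * (4 + (p - 1)*w) := by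
    nlinarith [pow_le_pow_left₀ hy.le hty 2, mul_nonneg (mul_nonneg hp1.le hw) (sq_nonneg t)]
  have hDpos : (0:ℝ) < 4*y^2 := by positivity
  have habs : |Fa p a t w| = Fa p a t w := by
    apply abs_of_nonneg
    unfold Fa
    exact div_nonneg hN0 (le_trans hDpos.le hD)
  rw [habs]
  unfold Fa
  exact div_le_div₀ (le_trans hN0 hNC) hNC hDpos hD

variable {p : ℝ} {G : ℝ → ℝ → ℝ}

lemma Gnonneg (hG : IsGFamily p G) {a : ℝ} (ha : 0 < a) {t : ℝ} (ht : t ∈ Ioc (0:ℝ) 1) :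
    0 ≤ G a t := by
  obtain ⟨_, h1, _, hpos, _⟩ := hG a ha
  rcases lt_or_eq_of_le ht.2 with h | h
  · exact (hpos t ⟨ht.1, h⟩).le
  · rw [h, h1]

lemma contFaG (hp : 1 < p) (hG : IsGFamily p G) {a y : ℝ} (ha : 0 < a) (hy : y ∈ Ioo (0:ℝ) 1) :
    ContinuousOn (fun t => Fa p a t (G a t)) (Icc y 1) := by
  obtain ⟨hc, h1, hd, hpos, hanti⟩ := hG a ha
  have hsub : Icc y 1 ⊆ Ioc (0:ℝ) 1 := fun t ht => ⟨lt_of_lt_of_le hy.1 ht.1, ht.2⟩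
  have hGc : ContinuousOn (G a) (Icc y 1) := hc.mono hsub
  unfold Fa
  apply ContinuousOn.div
  · exact (continuousOn_const.mul (continuousOn_const.add
      (continuousOn_const.mul continuousOn_id))).add
      (((continuousOn_const.add (continuousOn_const.mul continuousOn_id)).add
        ((continuousOn_const.mul continuousOn_id).mul hGc)).mul hGc)
  · exact ((continuousOn_id.pow 2).mul (continuousOn_const.add (continuousOn_const.mul hGc)))
  · intro t ht
    have ht0 : 0 < t := lt_of_lt_of_le hy.1 ht.1
    have hGt : 0 ≤ G a t := Gnonneg hG ha (hsub ht)
    have : 0 < 4 + (p - 1) * G a t := by nlinarith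
    positivity

lemma G_int_rep (hp : 1 < p) (hG : IsGFamily p G) {a y : ℝ} (ha : 0 < a)
    (hy : y ∈ Ioc (0:ℝ) 1) : G a y = ∫ t in y..1, Fa p a t (G a t) := by
  obtain ⟨hc, h1, hd, hpos, hanti⟩ := hG a ha
  rcases lt_or_eq_of_le hy.2 with h | h
  · have hy' : y ∈ Ioo (0:ℝ) 1 := ⟨hy.1, h⟩
    have hsub : Icc y 1 ⊆ Ioc (0:ℝ) 1 := fun t ht => ⟨lt_of_lt_of_le hy.1 ht.1, ht.2⟩
    have hcont : ContinuousOn (fun t => Fa p a t (G a t)) (Icc y 1) := contFaG hp hG ha hy'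
    have hint : IntervalIntegrable (fun t => -(Fa p a t (G a t))) volume y 1 :=
      (hcont.neg).intervalIntegrable_of_Icc hy.2
    have heq := intervalIntegral.integral_eq_sub_of_hasDeriv_right_of_le hy.2
      (hc.mono hsub)
      (fun t ht => ((hd t ⟨lt_trans hy.1 ht.1, ht.2⟩).hasDerivWithinAt))
      hint
    rw [intervalIntegral.integral_neg] at heq
    rw [h1] at heq
    linarith [heq]
  · rw [h]
    simp [h1]

lemma tendsto_FaG (hp : 1 < p) (hG : IsGFamily p G) {K : ℝ → ℝ}
    (hK : ∀ y ∈ Set.Ioc (0:ℝ) 1, Tendsto (fun a => G a y) atTop (nhds (K y)))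
    {t : ℝ} (ht : t ∈ Ioc (0:ℝ) 1) :
    Tendsto (fun a => Fa p a t (G a t)) atTop (𝓝 (Finf p t (K t))) := by
  have ht0 : 0 < t := ht.1
  have hKt : 0 ≤ K t := by
    refine ge_of_tendsto (hK t ht) ?_
    filter_upwards [eventually_gt_atTop (0:ℝ)] with a ha
    exact Gnonneg hG ha ht
  have hp1 : (0:ℝ) < p - 1 := by linarith
  have hden : t^2 * (4 + (p - 1) * K t) ≠ 0 := by
    have : 0 < 4 + (p - 1) * K t := by nlinarith
    positivity
  have h0 : Tendsto (fun a : ℝ => 1/a) atTop (𝓝 (0:ℝ)) := by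
    simpa [one_div] using (tendsto_inv_atTop_zero : Tendsto (fun a : ℝ => a⁻¹) atTop (𝓝 0))
  have hGt : Tendsto (fun a => G a t) atTop (𝓝 (K t)) := hK t ht
  have hnum : Tendsto (fun a => 8*p*(1/a + 2*t) +
      (2*p/a + 4*(3*p - 2)*t + 2*(p - 1)*t*(G a t))*(G a t)) atTop
      (𝓝 (8*p*((0:ℝ) + 2*t) + (2*p*(0:ℝ) + 4*(3*p - 2)*t + 2*(p - 1)*t*(K t))*(K t))) := by
    have h2pa : Tendsto (fun a : ℝ => 2*p/a) atTop (𝓝 (2*p*(0:ℝ))) := by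
      have := h0.const_mul (2*p)
      simpa [mul_one_div, div_eq_mul_inv] using this
    exact (tendsto_const_nhds.mul (h0.add tendsto_const_nhds)).add
      (((h2pa.add tendsto_const_nhds).add ((tendsto_const_nhds.mul hGt))).mul hGt)
  have hdenom : Tendsto (fun a => t^2 * (4 + (p - 1)*(G a t))) atTop
      (𝓝 (t^2 * (4 + (p - 1)*(K t)))) :=
    tendsto_const_nhds.mul (tendsto_const_nhds.add (tendsto_const_nhds.mul hGt))
  have hlim := hnum.div hdenom hden
  have heq : (8*p*((0:ℝ) + 2*t) + (2*p*(0:ℝ) + 4*(3*p - 2)*t + 2*(p - 1)*t*(K t))*(K t)) /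
      (t^2 * (4 + (p - 1)*(K t))) = Finf p t (K t) := by
    unfold Finf
    have h4 : (4 + (p - 1) * K t) ≠ 0 := by nlinarith
    field_simp
    ring
  rw [heq] at hlim
  exact hlim.congr (fun a => by simp only [Pi.div_apply]; unfold Fa; ring_nf)

theorem K_satisfies_limit_ODE (p : ℝ) (hp : 1 < p) (G : ℝ → ℝ → ℝ) (K : ℝ → ℝ)
    (hG : IsGFamily p G)
    (hK : ∀ y ∈ Set.Ioc (0:ℝ) 1,
      Filter.Tendsto (fun a => G a y) Filter.atTop (nhds (K y))) :
    ContinuousOn K (Set.Ioo 0 1) ∧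
    (∀ y ∈ Set.Ioo (0:ℝ) 1, DifferentiableAt ℝ K y) ∧
    (∀ y ∈ Set.Ioo (0:ℝ) 1, HasDerivAt K (-(Finf p y (K y))) y) ∧
    (∀ y ∈ Set.Ioo (0:ℝ) 1,
      -(Finf p y (K y)) =
        -((16*p + 4*(3*p - 2)*(K y) + 2*(p - 1)*(K y)^2) / (y * (4 + (p - 1)*(K y))))) := by
  have hK0 : ∀ t ∈ Ioc (0:ℝ) 1, 0 ≤ K t := by
    intro t ht
    refine ge_of_tendsto (hK t ht) ?_
    filter_upwards [eventually_gt_atTop (0:ℝ)] with a ha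
    exact Gnonneg hG ha ht
  have hp1 : (0:ℝ) < p - 1 := by linarith
  -- uniform bounds on `[y,1]`
  have hB : ∀ y ∈ Ioo (0:ℝ) 1, ∃ B : ℝ, 0 ≤ B ∧
      (∀ᶠ a in atTop, ∀ t ∈ Icc y 1, |Fa p a t (G a t)| ≤ B) ∧
      (∀ t ∈ Ioc y 1, |Finf p t (K t)| ≤ B) := by
    intro y hy
    have hy' : y ∈ Ioc (0:ℝ) 1 := ⟨hy.1, hy.2.le⟩
    have hKy : 0 ≤ K y := hK0 y hy'
    set M : ℝ := K y + 1 with hMdef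
    have hM0 : 0 ≤ M := by simp only [hMdef]; linarith
    have hevF : ∀ᶠ a in atTop, ∀ t ∈ Icc y 1,
        |Fa p a t (G a t)| ≤ (24*p + (2*p + 4*(3*p - 2) + 2*(p - 1)*M)*M) / (4*y^2) := by
      filter_upwards [eventually_ge_atTop (1:ℝ),
        (hK y hy').eventually_lt_const (lt_add_one (K y))] with a ha1 haM
      intro t ht
      have ha0 : (0:ℝ) < a := lt_of_lt_of_le one_pos ha1
      have ht' : t ∈ Ioc (0:ℝ) 1 := ⟨lt_of_lt_of_le hy.1 ht.1, ht.2⟩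
      have hGle : G a t ≤ G a y := ((hG a ha0).2.2.2.2.antitoneOn) hy' ht' ht.1
      exact Fa_bound hp ha1 hy.1 ht.1 ht.2 (Gnonneg hG ha0 ht') (le_trans hGle haM.le)
    refine ⟨(24*p + (2*p + 4*(3*p - 2) + 2*(p - 1)*M)*M) / (4*y^2), ?_, hevF, ?_⟩
    · apply div_nonneg ?_ (by positivity)
      nlinarith [mul_nonneg (mul_nonneg hp1.le hM0) hM0]
    · intro t ht
      have ht' : t ∈ Ioc (0:ℝ) 1 := ⟨lt_trans hy.1 ht.1, ht.2⟩
      refine le_of_tendsto (tendsto_FaG hp hG hK ht').abs ?_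
      filter_upwards [hevF] with a ha
      exact ha t ⟨ht.1.le, ht.2⟩
  -- integral representation of K
  have hrep : ∀ y ∈ Ioo (0:ℝ) 1, K y = ∫ t in y..1, Finf p t (K t) := by
    intro y hy
    have hy' : y ∈ Ioc (0:ℝ) 1 := ⟨hy.1, hy.2.le⟩
    obtain ⟨B, hB0, hBev, hBlim⟩ := hB y hy
    have huIoc : Set.uIoc y (1:ℝ) = Ioc y 1 := uIoc_of_le hy.2.le
    have hDCT := intervalIntegral.tendsto_integral_filter_of_dominated_convergence
      (μ := volume) (l := (atTop : Filter ℝ)) (a := y) (b := 1) (F := fun a t => Fa p a t (G a t))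
      (f := fun t => Finf p t (K t)) (bound := fun _ => B)
      ?_ ?_ intervalIntegrable_const ?_
    · have hGlim : Tendsto (fun a => G a y) atTop
          (𝓝 (∫ t in y..1, Finf p t (K t))) := by
        refine hDCT.congr' ?_
        filter_upwards [eventually_gt_atTop (0:ℝ)] with a ha
        exact (G_int_rep hp hG ha hy').symm
      exact tendsto_nhds_unique (hK y hy') hGlim
    · filter_upwards [eventually_gt_atTop (0:ℝ)] with a ha
      rw [huIoc]
      exact ((contFaG hp hG ha hy).mono Ioc_subset_Icc_self).aestronglyMeasurable
        measurableSet_Ioc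
    · filter_upwards [hBev] with a ha
      refine Eventually.of_forall fun x hx => ?_
      rw [huIoc] at hx
      rw [Real.norm_eq_abs]
      exact ha x (Ioc_subset_Icc_self hx)
    · refine Eventually.of_forall fun x hx => ?_
      rw [huIoc] at hx
      exact tendsto_FaG hp hG hK ⟨lt_trans hy.1 hx.1, hx.2⟩
  -- continuity of K
  have hKcont : ContinuousOn K (Ioo 0 1) := by
    intro y₀ hy₀
    have hy : y₀/2 ∈ Ioo (0:ℝ) 1 := ⟨by linarith [hy₀.1], by linarith [hy₀.2, hy₀.1]⟩
    set y : ℝ := y₀/2 with hydef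
    obtain ⟨B, hB0, hBev, _⟩ := hB y hy
    have hkey : ∀ s ∈ Icc y 1, ∀ s' ∈ Icc y 1, s ≤ s' → |K s - K s'| ≤ B * (s' - s) := by
      intro s hs s' hs' hss'
      have hs1 : s ∈ Ioc (0:ℝ) 1 := ⟨lt_of_lt_of_le hy.1 hs.1, hs.2⟩
      have hs'1 : s' ∈ Ioc (0:ℝ) 1 := ⟨lt_of_lt_of_le hy.1 hs'.1, hs'.2⟩
      have h1 : Tendsto (fun a => |G a s - G a s'|) atTop (𝓝 |K s - K s'|) :=
        ((hK s hs1).sub (hK s' hs'1)).abs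
      refine le_of_tendsto h1 ?_
      filter_upwards [hBev, eventually_gt_atTop (0:ℝ)] with a hba ha0
      have hcont := contFaG hp hG ha0 hy
      have hint1 : IntervalIntegrable (fun t => Fa p a t (G a t)) volume s s' :=
        (hcont.mono (Icc_subset_Icc hs.1 hs'.2)).intervalIntegrable_of_Icc hss'
      have hint2 : IntervalIntegrable (fun t => Fa p a t (G a t)) volume s' 1 :=
        (hcont.mono (Icc_subset_Icc hs'.1 le_rfl)).intervalIntegrable_of_Icc hs'.2
      have hsplit := intervalIntegral.integral_add_adjacent_intervals hint1 hint2
      have hGs := G_int_rep hp hG ha0 hs1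
      have hGs' := G_int_rep hp hG ha0 hs'1
      have hdiff : G a s - G a s' = ∫ t in s..s', Fa p a t (G a t) := by
        rw [hGs, hGs', ← hsplit]; ring
      rw [hdiff]
      have hbd := intervalIntegral.norm_integral_le_of_norm_le_const
        (C := B) (f := fun t => Fa p a t (G a t)) (a := s) (b := s') ?_
      · rw [Real.norm_eq_abs] at hbd
        calc |∫ t in s..s', Fa p a t (G a t)| ≤ B * |s' - s| := hbd
        _ = B * (s' - s) := by rw [abs_of_nonneg (by linarith)]
      · intro x hx
        rw [uIoc_of_le hss'] at hx
        rw [Real.norm_eq_abs]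
        exact hba x ⟨le_trans hs.1 hx.1.le, le_trans hx.2 hs'.2⟩
    have hlw : LipschitzOnWith (Real.toNNReal B) K (Icc y 1) := by
      apply LipschitzOnWith.of_dist_le_mul
      intro s hs s' hs'
      rw [Real.dist_eq, Real.dist_eq]
      have hcoe : (Real.toNNReal B : ℝ) = B := Real.coe_toNNReal B hB0
      rw [hcoe]
      rcases le_total s s' with h | h
      · calc |K s - K s'| ≤ B * (s' - s) := hkey s hs s' hs' h
        _ = B * |s - s'| := by rw [abs_sub_comm, abs_of_nonneg (by linarith)]
      · calc |K s - K s'| = |K s' - K s| := abs_sub_comm _ _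
        _ ≤ B * (s - s') := hkey s' hs' s hs h
        _ = B * |s - s'| := by rw [abs_of_nonneg (by linarith)]
    have hicc : Icc y 1 ∈ 𝓝 y₀ := Icc_mem_nhds (by linarith [hy₀.1]) hy₀.2
    exact ((hlw.continuousOn.continuousAt hicc)).continuousWithinAt
  -- continuity of the limiting vector field along K
  have hgc : ContinuousOn (fun t => Finf p t (K t)) (Ioo 0 1) := by
    unfold Finf
    apply ContinuousOn.div
    · exact (continuousOn_const.add (continuousOn_const.mul hKcont)).add
        (continuousOn_const.mul (hKcont.pow 2))
    · exact continuousOn_id.mul (continuousOn_const.add (continuousOn_const.mul hKcont))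
    · intro t ht
      have hKt : 0 ≤ K t := hK0 t ⟨ht.1, ht.2.le⟩
      have h4 : 0 < 4 + (p - 1) * K t := by nlinarith
      have ht0 : (0:ℝ) < t := ht.1
      positivity
  -- the ODE for K
  have hmain : ∀ y ∈ Ioo (0:ℝ) 1, HasDerivAt K (-(Finf p y (K y))) y := by
    intro y₀ hy₀
    have hy : y₀/2 ∈ Ioo (0:ℝ) 1 := ⟨by linarith [hy₀.1], by linarith [hy₀.2, hy₀.1]⟩
    set y : ℝ := y₀/2 with hydef
    obtain ⟨B, hB0, _, hBlim⟩ := hB y hy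
    have hmeasg : AEStronglyMeasurable (fun t => Finf p t (K t))
        (volume.restrict (Ioo y 1)) :=
      (hgc.mono (fun t ht => ⟨lt_trans hy.1 ht.1, ht.2⟩)).aestronglyMeasurable
        measurableSet_Ioo
    have hintg : IntegrableOn (fun t => Finf p t (K t)) (Ioc y 1) volume := by
      rw [integrableOn_Ioc_iff_integrableOn_Ioo]
      refine Integrable.mono' (integrable_const B) hmeasg ?_
      refine (ae_restrict_iff' measurableSet_Ioo).2 (Eventually.of_forall fun t ht => ?_)
      rw [Real.norm_eq_abs]
      exact hBlim t ⟨ht.1, ht.2.le⟩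
    have hii : IntervalIntegrable (fun t => Finf p t (K t)) volume y₀ 1 := by
      rw [intervalIntegrable_iff_integrableOn_Ioc_of_le hy₀.2.le]
      exact hintg.mono_set (Ioc_subset_Ioc_left (by linarith [hy₀.1]))
    have hsm : StronglyMeasurableAtFilter (fun t => Finf p t (K t)) (𝓝 y₀) :=
      ⟨Ioo y 1, Ioo_mem_nhds (by linarith [hy₀.1]) hy₀.2, hmeasg⟩
    have hca : ContinuousAt (fun t => Finf p t (K t)) y₀ :=
      hgc.continuousAt (Ioo_mem_nhds hy₀.1 hy₀.2)
    have hF := intervalIntegral.integral_hasDerivAt_left hii hsm hca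
    have heq : K =ᶠ[𝓝 y₀] (fun u => ∫ t in u..1, Finf p t (K t)) := by
      filter_upwards [Ioo_mem_nhds hy₀.1 hy₀.2] with s hs
      exact hrep s hs
    exact hF.congr_of_eventuallyEq heq
  exact ⟨hKcont, fun y hy => (hmain y hy).differentiableAt, hmain, fun y hy => rfl⟩
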